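/- For the bilinear game f(x,y) = αxy, the linearized CGD (LCGD) update x_{k+1} = x_k − η(αy_k + ηα²x_k), y_{k+1} = y_k + η(αx_k − ηα²y_k) satisfies x_{k+1}² + y_{k+1}² = ((1−η²α²)² + η²α²)(x_k² + y_k²). In particular LCGD converges to (0,0) for all nonzero starting points if and only if η²α² < 1. -/

import Mathlib

open Filter

private def lseq (α η : ℝ) : ℕ → ℝ × ℝ
  | 0 => (1, 0)
  | (k+1) =>
    let p := lseq α η k
    (p.1 - η * (α * p.2 + η * α ^ 2 * p.1),
     p.2 + η * (α * p.1 - η * α ^ 2 * p.2))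

private lemma step (α η : ℝ) (x y : ℕ → ℝ)
    (hx : ∀ k, x (k + 1) = x k - η * (α * y k + η * α ^ 2 * x k))
    (hy : ∀ k, y (k + 1) = y k + η * (α * x k - η * α ^ 2 * y k)) :
    ∀ k, x (k + 1) ^ 2 + y (k + 1) ^ 2 =
      ((1 - η ^ 2 * α ^ 2) ^ 2 + η ^ 2 * α ^ 2) * (x k ^ 2 + y k ^ 2) := by
  intro k; rw [hx, hy]; ring

private lemma geom (α η : ℝ) (x y : ℕ → ℝ)
    (hx : ∀ k, x (k + 1) = x k - η * (α * y k + η * α ^ 2 * x k))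
    (hy : ∀ k, y (k + 1) = y k + η * (α * x k - η * α ^ 2 * y k)) :
    ∀ k, x k ^ 2 + y k ^ 2 =
      ((1 - η ^ 2 * α ^ 2) ^ 2 + η ^ 2 * α ^ 2) ^ k * (x 0 ^ 2 + y 0 ^ 2) := by
  intro k
  induction k with
  | zero => simp
  | succ n ih => rw [step α η x y hx hy n, ih, pow_succ]; ring

theorem stmt_9 (α η : ℝ) (hα : α ≠ 0) (hη : 0 < η) :
    (∀ x y : ℕ → ℝ,
      (∀ k, x (k + 1) = x k - η * (α * y k + η * α ^ 2 * x k)) →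
      (∀ k, y (k + 1) = y k + η * (α * x k - η * α ^ 2 * y k)) →
      ∀ k, x (k + 1) ^ 2 + y (k + 1) ^ 2 =
        ((1 - η ^ 2 * α ^ 2) ^ 2 + η ^ 2 * α ^ 2) * (x k ^ 2 + y k ^ 2)) ∧
    ((∀ x y : ℕ → ℝ,
        (∀ k, x (k + 1) = x k - η * (α * y k + η * α ^ 2 * x k)) →
        (∀ k, y (k + 1) = y k + η * (α * x k - η * α ^ 2 * y k)) →
        (x 0, y 0) ≠ (0, 0) →
        Tendsto (fun k => (x k, y k)) atTop (nhds (0, 0))) ↔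
      η ^ 2 * α ^ 2 < 1) := by
  set t := η ^ 2 * α ^ 2 with ht
  have ht0 : 0 < t := by positivity
  set r := (1 - t) ^ 2 + t with hr
  have hr0 : 0 ≤ r := by positivity
  refine ⟨step α η, ?_, ?_⟩
  · -- convergence for all starting points → t < 1
    intro H
    by_contra hge
    push_neg at hge
    have hr1 : 1 ≤ r := by nlinarith
    set x : ℕ → ℝ := fun k => (lseq α η k).1 with hxdef
    set y : ℕ → ℝ := fun k => (lseq α η k).2 with hydef
    have hx : ∀ k, x (k + 1) = x k - η * (α * y k + η * α ^ 2 * x k) := fun k => rfl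
    have hy : ∀ k, y (k + 1) = y k + η * (α * x k - η * α ^ 2 * y k) := fun k => rfl
    have hx0 : x 0 = 1 := rfl
    have hy0 : y 0 = 0 := rfl
    have hco := H x y hx hy (by simp [hx0, hy0])
    have hxt : Tendsto x atTop (nhds 0) := by
      have := (continuous_fst.tendsto ((0,0):ℝ×ℝ)).comp hco
      simpa [Function.comp_def] using this
    have hyt : Tendsto y atTop (nhds 0) := by
      have := (continuous_snd.tendsto ((0,0):ℝ×ℝ)).comp hco
      simpa [Function.comp_def] using this
    have hSt : Tendsto (fun k => x k ^ 2 + y k ^ 2) atTop (nhds 0) := by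
      have := (hxt.mul hxt).add (hyt.mul hyt)
      simpa [sq] using this
    have hge1 : ∀ k, (1:ℝ) ≤ x k ^ 2 + y k ^ 2 := by
      intro k
      rw [geom α η x y hx hy k, hx0, hy0]
      simpa using one_le_pow₀ hr1
    have : (1:ℝ) ≤ 0 := le_of_tendsto_of_tendsto tendsto_const_nhds hSt
      (Eventually.of_forall hge1)
    linarith
  · -- t < 1 → convergence
    intro hlt x y hx hy _
    have hr1 : r < 1 := by nlinarith
    have hS : ∀ k, x k ^ 2 + y k ^ 2 = r ^ k * (x 0 ^ 2 + y 0 ^ 2) :=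
      geom α η x y hx hy
    have hrt : Tendsto (fun k : ℕ => r ^ k * (x 0 ^ 2 + y 0 ^ 2)) atTop (nhds 0) := by
      have := tendsto_pow_atTop_nhds_zero_of_lt_one hr0 hr1
      simpa using this.mul_const (x 0 ^ 2 + y 0 ^ 2)
    have hSt : Tendsto (fun k => x k ^ 2 + y k ^ 2) atTop (nhds 0) :=
      hrt.congr (fun k => (hS k).symm)
    have hx2 : Tendsto (fun k => x k ^ 2) atTop (nhds 0) := by
      apply squeeze_zero (fun k => sq_nonneg _) (fun k => ?_) hSt
      nlinarith [sq_nonneg (y k)]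
    have hy2 : Tendsto (fun k => y k ^ 2) atTop (nhds 0) := by
      apply squeeze_zero (fun k => sq_nonneg _) (fun k => ?_) hSt
      nlinarith [sq_nonneg (x k)]
    have hxt : Tendsto x atTop (nhds 0) := by
      have h := hx2.sqrt
      simp only [Real.sqrt_sq_eq_abs, Real.sqrt_zero] at h
      exact tendsto_zero_iff_abs_tendsto_zero x |>.2 h
    have hyt : Tendsto y atTop (nhds 0) := by
      have h := hy2.sqrt
      simp only [Real.sqrt_sq_eq_abs, Real.sqrt_zero] at h
      exact tendsto_zero_iff_abs_tendsto_zero y |>.2 h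
    exact hxt.prodMk_nhds hyt
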